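/- Let (V, j) be a 2m-dimensional real vector space with complex structure, E = V ⊕ V*, J₊ = diag(j, j*), b the canonical pairing. Let S be an endomorphism of E with S² = id, S skew-symmetric for b, S split, and S J₊ = −J₊ S. Then the bilinear form β_S(x, y) = b(S J₊ x, y) on E is symmetric, and its signature is (2n, 4m−2n) for some integer 0 ≤ n ≤ 2m; in particular both indices of the signature are even. -/

import Mathlib

/-- A real bilinear form `β` on `E` has signature `(p, q)`: a maximal
positive-definite subspace has dimension `p` and a maximal negative-definite
subspace has dimension `q`. -/
def HasSignature {E : Type*} [AddCommGroup E] [Module ℝ E]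
    (β : E → E → ℝ) (p q : ℕ) : Prop :=
  ((∃ P : Submodule ℝ E, Module.finrank ℝ P = p ∧ ∀ x ∈ P, x ≠ 0 → 0 < β x x) ∧
    ∀ P : Submodule ℝ E, (∀ x ∈ P, x ≠ 0 → 0 < β x x) → Module.finrank ℝ P ≤ p) ∧
  ((∃ N : Submodule ℝ E, Module.finrank ℝ N = q ∧ ∀ x ∈ N, x ≠ 0 → β x x < 0) ∧
    ∀ N : Submodule ℝ E, (∀ x ∈ N, x ≠ 0 → β x x < 0) → Module.finrank ℝ N ≤ q)

open Module Submodule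

lemma hasSig_core {E : Type*} [AddCommGroup E] [Module ℝ E] [FiniteDimensional ℝ E]
    (B : E →ₗ[ℝ] E →ₗ[ℝ] ℝ) {ι : Type*} [Fintype ι] [DecidableEq ι] (bE : Basis ι ℝ E)
    (d : ι → ℝ) (hd : ∀ a, d a ≠ 0) (hdiag : ∀ a, B (bE a) (bE a) = d a)
    (horth : ∀ a c, a ≠ c → B (bE a) (bE c) = 0) :
    HasSignature (fun x y => B x y)
      (Finset.univ.filter (fun a => 0 < d a)).card
      (Finset.univ.filter (fun a => d a < 0)).card := by
  classical
  have key : ∀ x : E, B x x = ∑ a, (bE.repr x a) ^ 2 * d a := by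
    intro x
    conv_lhs => rw [← bE.sum_repr x]
    rw [map_sum]
    refine Finset.sum_congr rfl fun a _ => ?_
    rw [map_smul, smul_eq_mul, map_sum, LinearMap.sum_apply]
    rw [Finset.sum_eq_single a
      (fun c _ hc => by
        rw [map_smul, LinearMap.smul_apply, smul_eq_mul, horth c a hc, mul_zero])
      (fun h => absurd (Finset.mem_univ a) h)]
    rw [map_smul, LinearMap.smul_apply, smul_eq_mul, hdiag]
    ring
  have hsupp : ∀ (s : Finset ι) (x : E), x ∈ span ℝ (bE '' ↑s) →
      ∀ a, a ∉ s → bE.repr x a = 0 := by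
    intro s x hx a ha
    by_contra h
    exact ha ((Basis.mem_span_image bE).1 hx (Finsupp.mem_support_iff.2 h))
  have hne : ∀ x : E, x ≠ 0 → (bE.repr x).support.Nonempty := by
    intro x hx0
    rw [Finsupp.support_nonempty_iff]
    intro h
    exact hx0 (by simpa using congrArg bE.repr.symm h)
  have posdef : ∀ s : Finset ι, (∀ a ∈ s, 0 < d a) →
      ∀ x ∈ span ℝ (bE '' ↑s), x ≠ 0 → 0 < B x x := by
    intro s hs x hx hx0
    rw [key]
    obtain ⟨a0, ha0⟩ := hne x hx0
    have hc0 : bE.repr x a0 ≠ 0 := Finsupp.mem_support_iff.1 ha0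
    have ha0s : a0 ∈ s := by
      by_contra h
      exact hc0 (hsupp s x hx a0 h)
    refine Finset.sum_pos' (fun a _ => ?_) ⟨a0, Finset.mem_univ a0, ?_⟩
    · rcases eq_or_ne (bE.repr x a) 0 with h | h
      · simp [h]
      · have ha : a ∈ s := by
          by_contra hh
          exact h (hsupp s x hx a hh)
        have := hs a ha
        positivity
    · have := hs a0 ha0s
      positivity
  have negdef : ∀ s : Finset ι, (∀ a ∈ s, d a < 0) →
      ∀ x ∈ span ℝ (bE '' ↑s), x ≠ 0 → B x x < 0 := by
    intro s hs x hx hx0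
    rw [key]
    obtain ⟨a0, ha0⟩ := hne x hx0
    have hc0 : bE.repr x a0 ≠ 0 := Finsupp.mem_support_iff.1 ha0
    have ha0s : a0 ∈ s := by
      by_contra h
      exact hc0 (hsupp s x hx a0 h)
    have : 0 < ∑ a, (bE.repr x a) ^ 2 * (-(d a)) := by
      refine Finset.sum_pos' (fun a _ => ?_) ⟨a0, Finset.mem_univ a0, ?_⟩
      · rcases eq_or_ne (bE.repr x a) 0 with h | h
        · simp [h]
        · have ha : a ∈ s := by
            by_contra hh
            exact h (hsupp s x hx a hh)
          have := hs a ha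
          have : 0 < -(d a) := by linarith
          positivity
      · have := hs a0 ha0s
        have h2 : 0 < -(d a0) := by linarith
        positivity
    have heq : ∑ a, (bE.repr x a) ^ 2 * d a = -∑ a, (bE.repr x a) ^ 2 * (-(d a)) := by
      rw [← Finset.sum_neg_distrib]
      exact Finset.sum_congr rfl fun a _ => by ring
    rw [heq]
    linarith
  have frank : ∀ s : Finset ι, finrank ℝ (span ℝ (bE '' ↑s)) = s.card := by
    intro s
    rw [Set.image_eq_range]
    have hli : LinearIndependent ℝ (fun x : ↥(↑s : Set ι) => bE ↑x) :=
      bE.linearIndependent.comp _ Subtype.val_injective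
    rw [finrank_span_eq_card hli]
    simp
  set posS := Finset.univ.filter (fun a => 0 < d a) with hposS
  set negS := Finset.univ.filter (fun a => d a < 0) with hnegS
  have hposmem : ∀ a, a ∈ posS ↔ 0 < d a := by intro a; simp [hposS]
  have hnegmem : ∀ a, a ∈ negS ↔ d a < 0 := by intro a; simp [hnegS]
  have hcards : posS.card + negS.card = Fintype.card ι := by
    have : negS = posSᶜ := by
      ext a
      simp only [hposS, hnegS, Finset.mem_filter, Finset.mem_univ, true_and, Finset.mem_compl]
      constructor
      · intro h; linarith
      · intro h; rcases (hd a).lt_or_gt with h' | h'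
        · exact h'
        · exact absurd h' h
    rw [this, Finset.card_add_card_compl]
  have hfr : finrank ℝ E = Fintype.card ι := finrank_eq_card_basis bE
  have maxlem : ∀ (s : Finset ι) (P : Submodule ℝ E),
      (∀ x ∈ span ℝ (bE '' ↑s), x ≠ 0 → B x x < 0) →
      (∀ x ∈ P, x ≠ 0 → 0 < B x x) → finrank ℝ P ≤ Fintype.card ι - s.card := by
    intro s P hNs hP
    have hdisj : P ⊓ span ℝ (bE '' ↑s) = ⊥ := by
      rw [eq_bot_iff]
      intro x hx
      simp only [Submodule.mem_inf] at hx
      by_contra hx0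
      have h1 := hP x hx.1 (by simpa using hx0)
      have h2 := hNs x hx.2 (by simpa using hx0)
      simp only [Submodule.mem_bot] at hx0
      linarith
    have hsum := Submodule.finrank_sup_add_finrank_inf_eq P (span ℝ (bE '' ↑s))
    rw [hdisj, finrank_bot, add_zero, frank s] at hsum
    have hle : finrank ℝ ↥(P ⊔ span ℝ (bE '' ↑s)) ≤ finrank ℝ E := Submodule.finrank_le _
    omega
  constructor
  · constructor
    · exact ⟨span ℝ (bE '' ↑posS), frank posS,
        posdef posS (fun a ha => (hposmem a).1 ha)⟩
    · intro P hP
      have := maxlem negS P (negdef negS (fun a ha => (hnegmem a).1 ha)) hP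
      omega
  · constructor
    · exact ⟨span ℝ (bE '' ↑negS), frank negS,
        negdef negS (fun a ha => (hnegmem a).1 ha)⟩
    · intro N hN
      -- symmetric: maximality for negative subspaces
      have hdisj : N ⊓ span ℝ (bE '' ↑posS) = ⊥ := by
        rw [eq_bot_iff]
        intro x hx
        simp only [Submodule.mem_inf] at hx
        by_contra hx0
        have h1 := hN x hx.1 (by simpa using hx0)
        have h2 := posdef posS (fun a ha => (hposmem a).1 ha) x hx.2 (by simpa using hx0)
        simp only [Submodule.mem_bot] at hx0
        linarith
      have hsum := Submodule.finrank_sup_add_finrank_inf_eq N (span ℝ (bE '' ↑posS))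
      rw [hdisj, finrank_bot, add_zero, frank posS] at hsum
      have hle : finrank ℝ ↥(N ⊔ span ℝ (bE '' ↑posS)) ≤ finrank ℝ E := Submodule.finrank_le _
      omega

private def Bform (V : Type*) [AddCommGroup V] [Module ℝ V] :
    (V × Module.Dual ℝ V) →ₗ[ℝ] (V × Module.Dual ℝ V) →ₗ[ℝ] ℝ :=
  LinearMap.mk₂ ℝ (fun x y => y.2 x.1 + x.2 y.1)
    (fun m₁ m₂ n => by
      simp only [Prod.fst_add, Prod.snd_add, map_add, LinearMap.add_apply]; ring)
    (fun c m n => by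
      simp only [Prod.smul_fst, Prod.smul_snd, map_smul, LinearMap.smul_apply,
        smul_eq_mul]; ring)
    (fun m n₁ n₂ => by
      simp only [Prod.fst_add, Prod.snd_add, map_add, LinearMap.add_apply]; ring)
    (fun c m n => by
      simp only [Prod.smul_fst, Prod.smul_snd, map_smul, LinearMap.smul_apply,
        smul_eq_mul]; ring)

private lemma Bform_apply {V : Type*} [AddCommGroup V] [Module ℝ V]
    (x y : V × Module.Dual ℝ V) : Bform V x y = y.2 x.1 + x.2 y.1 := rfl


set_option maxHeartbeats 1000000 in
/-- for a split, `b`-skew-symmetric involution `S` of `E = V ⊕ V*`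
anti-commuting with `J₊`, the form `β_S(x,y) = b(S J₊ x, y)` is symmetric of
signature `(2n, 4m - 2n)` for some `0 ≤ n ≤ 2m`. -/
theorem stmt5 (V : Type*) [AddCommGroup V] [Module ℝ V] [FiniteDimensional ℝ V]
    (m : ℕ) (hdim : Module.finrank ℝ V = 2 * m)
    (j : V →ₗ[ℝ] V) (hj : ∀ v, j (j v) = -v)
    (b : (V × Module.Dual ℝ V) → (V × Module.Dual ℝ V) → ℝ)
    (hb : ∀ x y, b x y = y.2 x.1 + x.2 y.1)
    (J : (V × Module.Dual ℝ V) → (V × Module.Dual ℝ V))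
    (hJ : ∀ x, J x = (j x.1, j.dualMap x.2))
    (S : Module.End ℝ (V × Module.Dual ℝ V))
    (hS2 : ∀ x, S (S x) = x)
    (hskew : ∀ x y, b (S x) y = - b x (S y))
    (hsplit : Module.finrank ℝ (S.eigenspace 1) = Module.finrank ℝ (S.eigenspace (-1)))
    (hanti : ∀ x, S (J x) = - J (S x))
    (β : (V × Module.Dual ℝ V) → (V × Module.Dual ℝ V) → ℝ)
    (hβ : ∀ x y, β x y = b (S (J x)) y) :
    (∀ x y, β x y = β y x) ∧
    ∃ n : ℕ, n ≤ 2 * m ∧ HasSignature β (2 * n) (4 * m - 2 * n) := by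
  classical
  set Bl := Bform V with hBldef
  have hBl : ∀ x y, Bl x y = y.2 x.1 + x.2 y.1 := fun x y => rfl
  set Jl := j.prodMap j.dualMap with hJldef
  have hJlapp : ∀ x, Jl x = (j x.1, j.dualMap x.2) := fun x => rfl
  have hJl : ∀ x, J x = Jl x := fun x => by rw [hJ, hJlapp]
  set T := S ∘ₗ Jl with hTdef
  have hT : ∀ x, T x = S (Jl x) := fun x => rfl
  have hb' : ∀ x y, b x y = Bl x y := fun x y => by rw [hb, hBl]
  have hβ' : ∀ x y, β x y = Bl (T x) y := fun x y => by rw [hβ, hb', hJl x, hT]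
  have Bsymm : ∀ x y, Bl x y = Bl y x := fun x y => by rw [hBl, hBl]; ring
  have BJ : ∀ x y, Bl (Jl x) y = Bl x (Jl y) := by
    intro x y
    rw [hBl, hBl, hJlapp, hJlapp]
    simp only [LinearMap.dualMap_apply]
  have hskew' : ∀ x y, Bl (S x) y = -Bl x (S y) := fun x y => by
    rw [← hb', ← hb', hskew]
  have hanti' : ∀ x, S (Jl x) = -(Jl (S x)) := fun x => by
    rw [← hJl x, ← hJl (S x), hanti]
  have hJJ : ∀ x, Jl (Jl x) = -x := by
    intro x
    have h2 : j.dualMap (j.dualMap x.2) = -x.2 := by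
      ext w
      simp [LinearMap.dualMap_apply, hj w]
    rw [hJlapp, hJlapp]
    exact Prod.ext_iff.2 ⟨by simpa using hj x.1, by simpa using h2⟩
  have hSJ : ∀ x, Jl (S x) = -(S (Jl x)) := fun x => by rw [hanti' x, neg_neg]
  have hT2 : ∀ x, T (T x) = x := by
    intro x
    rw [hT, hT, hSJ, hJJ, map_neg, map_neg, map_neg, hS2, neg_neg]
  have hTJ : ∀ x, T (Jl x) = -(Jl (T x)) := by
    intro x
    rw [hT, hT, hJJ, map_neg, hSJ, hJJ, map_neg, neg_neg]
  have Tsymm : ∀ x y, Bl (T x) y = Bl x (T y) := by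
    intro x y
    rw [hT, hT, hskew', BJ, hSJ, map_neg, neg_neg]
  have βsymm : ∀ x y, β x y = β y x := by
    intro x y
    rw [hβ', hβ', Tsymm, Bsymm]
  refine ⟨βsymm, ?_⟩
  -- eigenspaces of T
  set Ep := LinearMap.ker (T - LinearMap.id) with hEpdef
  set En := LinearMap.ker (T + LinearMap.id) with hEndef
  have hEp : ∀ x, x ∈ Ep ↔ T x = x := by
    intro x
    rw [hEpdef, LinearMap.mem_ker, LinearMap.sub_apply, LinearMap.id_apply, sub_eq_zero]
  have hEn : ∀ x, x ∈ En ↔ T x = -x := by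
    intro x
    rw [hEndef, LinearMap.mem_ker, LinearMap.add_apply, LinearMap.id_apply,
      add_eq_zero_iff_eq_neg]
  have hdecomp : ∀ x, ∃ p ∈ Ep, ∃ n ∈ En, p + n = x := by
    intro x
    refine ⟨(2⁻¹ : ℝ) • (x + T x), ?_, (2⁻¹ : ℝ) • (x - T x), ?_, by module⟩
    · rw [hEp, map_smul, map_add, hT2]
      module
    · rw [hEn, map_smul, map_sub, hT2]
      module
  have hsup : Ep ⊔ En = ⊤ := by
    rw [eq_top_iff]
    intro x _
    obtain ⟨p, hp, n, hn, hpn⟩ := hdecomp x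
    exact hpn ▸ Submodule.add_mem_sup hp hn
  have hinf : Ep ⊓ En = ⊥ := by
    rw [eq_bot_iff]
    intro x hx
    obtain ⟨h1, h2⟩ := Submodule.mem_inf.1 hx
    rw [hEp] at h1
    rw [hEn] at h2
    have hxx : x = -x := h1.symm.trans h2
    have h4 : (2 : ℝ) • x = 0 := by
      rw [two_smul]
      nth_rewrite 2 [hxx]
      exact add_neg_cancel x
    rw [Submodule.mem_bot]
    exact (smul_eq_zero.1 h4).resolve_left (by norm_num)
  have hTfix : ∀ x ∈ Ep, T x = x := fun x hx => (hEp x).1 hx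
  have hJEp : ∀ x ∈ Ep, Jl x ∈ En := by
    intro x hx
    rw [hEn, hTJ, hTfix x hx]
  have hJEn : ∀ x ∈ En, Jl x ∈ Ep := by
    intro x hx
    rw [hEp, hTJ, (hEn x).1 hx, map_neg, neg_neg]
  have hJinj : Function.Injective Jl := by
    intro x y hxy
    have h := congrArg Jl hxy
    rw [hJJ, hJJ] at h
    exact neg_injective h
  have hfE : finrank ℝ (V × Module.Dual ℝ V) = 4 * m := by
    rw [Module.finrank_prod, Subspace.dual_finrank_eq, hdim]
    ring
  have hEpEn : finrank ℝ Ep = finrank ℝ En := by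
    have h1 : finrank ℝ Ep ≤ finrank ℝ En :=
      LinearMap.finrank_le_finrank_of_injective (f := Jl.restrict hJEp)
        (fun a b hab => Subtype.ext (hJinj (congrArg Subtype.val hab)))
    have h2 : finrank ℝ En ≤ finrank ℝ Ep :=
      LinearMap.finrank_le_finrank_of_injective (f := Jl.restrict hJEn)
        (fun a b hab => Subtype.ext (hJinj (congrArg Subtype.val hab)))
    omega
  have hranks : finrank ℝ Ep + finrank ℝ En = 4 * m := by
    have h := Submodule.finrank_sup_add_finrank_inf_eq Ep En
    rw [hsup, hinf, finrank_bot, finrank_top, hfE, add_zero] at h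
    omega
  have hkEp : finrank ℝ Ep = 2 * m := by omega
  -- nondegeneracy
  have hnd : ∀ x : V × Module.Dual ℝ V, (∀ y, Bl x y = 0) → x = 0 := by
    intro x h
    have h1 : x.1 = 0 := by
      rw [← Module.forall_dual_apply_eq_zero_iff ℝ x.1]
      intro φ
      have := h (0, φ)
      simpa [hBl] using this
    have h2 : x.2 = 0 := by
      ext w
      have := h (w, 0)
      simpa [hBl] using this
    exact Prod.ext_iff.2 ⟨h1, h2⟩
  have hcross : ∀ x ∈ Ep, ∀ y ∈ En, Bl x y = 0 := by
    intro x hx y hy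
    have h1 : Bl x y = -Bl x y := by
      conv_lhs => rw [← hTfix x hx]
      rw [Tsymm, (hEn y).1 hy, map_neg]
    linarith
  have hndEp : ∀ x ∈ Ep, (∀ y ∈ Ep, Bl x y = 0) → x = 0 := by
    intro x hx h
    apply hnd
    intro z
    obtain ⟨p, hp, n, hn, hpn⟩ := hdecomp z
    rw [← hpn, map_add, h p hp, hcross x hx n hn, add_zero]
  -- orthogonal basis of Ep
  haveI : Invertible (2 : ℝ) := invertibleOfNonzero (by norm_num)
  set Br := LinearMap.domRestrict₁₂ Bl Ep Ep with hBrdef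
  have hBrsymm : Br.IsSymm := by
    rw [hBrdef, LinearMap.isSymm_def]
    intro x y
    simp only [LinearMap.domRestrict₁₂_apply, RingHom.id_apply]
    exact Bsymm _ _
  obtain ⟨v, hv⟩ := LinearMap.BilinForm.exists_orthogonal_basis (K := ℝ) (V := ↥Ep) hBrsymm
  rw [LinearMap.isOrthoᵢ_def] at hv
  set d : Fin (finrank ℝ Ep) → ℝ := fun i => Bl ↑(v i) ↑(v i) with hddefn
  have horthE : ∀ i j', i ≠ j' → Bl ↑(v i) ↑(v j') = 0 := by
    intro i j' hij
    have h := hv i j' hij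
    rwa [hBrdef, LinearMap.domRestrict₁₂_apply] at h
  have hcoe_sum : ∀ y : Ep, (y : V × Module.Dual ℝ V)
      = ∑ i, v.repr y i • ((v i : Ep) : V × Module.Dual ℝ V) := by
    intro y
    conv_lhs => rw [← v.sum_repr y]
    rw [AddSubmonoidClass.coe_finset_sum]
    exact Finset.sum_congr rfl fun i _ => rfl
  have hBexp : ∀ (i : Fin (finrank ℝ Ep)) (y : Ep), Bl ↑(v i) ↑y = v.repr y i * d i := by
    intro i y
    rw [hcoe_sum y, map_sum]
    rw [Finset.sum_eq_single i
      (fun c _ hc => by rw [map_smul, smul_eq_mul, horthE i c (Ne.symm hc), mul_zero])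
      (fun h => absurd (Finset.mem_univ i) h)]
    rw [map_smul, smul_eq_mul, hddefn]
  have hdne : ∀ i, d i ≠ 0 := by
    intro i h0
    have hvz : ((v i : Ep) : V × Module.Dual ℝ V) = 0 := by
      apply hndEp _ (v i).2
      intro y hy
      have h := hBexp i ⟨y, hy⟩
      rw [h0, mul_zero] at h
      exact h
    exact Basis.ne_zero v i (Submodule.coe_eq_zero.1 hvz)
  -- combined family
  set g : (Fin (finrank ℝ Ep) ⊕ Fin (finrank ℝ Ep)) → V × Module.Dual ℝ V :=
    Sum.elim (fun i => ↑(v i)) (fun i => Jl ↑(v i)) with hgdef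
  -- values of the form on the family
  have hval_pp : ∀ x ∈ Ep, ∀ y, Bl (T x) y = Bl x y := by
    intro x hx y
    rw [hTfix x hx]
  have hval_JJ : ∀ x ∈ Ep, ∀ y ∈ Ep, Bl (T (Jl x)) (Jl y) = Bl x y := by
    intro x hx y hy
    have e1 : T (Jl x) = -(Jl x) := by rw [hTJ, hTfix x hx]
    rw [e1, map_neg, LinearMap.neg_apply, BJ, hJJ, map_neg, neg_neg]
  have hval_c1 : ∀ x ∈ Ep, ∀ y ∈ Ep, Bl (T x) (Jl y) = 0 := by
    intro x hx y hy
    rw [hval_pp x hx]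
    exact hcross x hx _ (hJEp y hy)
  have hval_c2 : ∀ x ∈ Ep, ∀ y ∈ Ep, Bl (T (Jl x)) y = 0 := by
    intro x hx y hy
    have e1 : T (Jl x) = -(Jl x) := by rw [hTJ, hTfix x hx]
    rw [e1, map_neg, LinearMap.neg_apply, Bsymm, hcross y hy _ (hJEp x hx), neg_zero]
  -- spanning
  have hEpspan : Ep = Submodule.span ℝ
      (Set.range fun i => ((v i : Ep) : V × Module.Dual ℝ V)) := by
    conv_lhs => rw [← Submodule.map_subtype_top Ep, ← v.span_eq]
    rw [Submodule.map_span, ← Set.range_comp]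
    rfl
  have hspan : ⊤ ≤ Submodule.span ℝ (Set.range g) := by
    rw [← hsup]
    apply sup_le
    · refine le_trans (le_of_eq hEpspan) (Submodule.span_mono ?_)
      rintro z ⟨i, rfl⟩
      exact ⟨Sum.inl i, rfl⟩
    · intro n hn
      have h1 : (-(Jl n)) ∈ Ep := Ep.neg_mem (hJEn n hn)
      have h2 : n = Jl (-(Jl n)) := by rw [map_neg, hJJ, neg_neg]
      have h3 : (-(Jl n)) ∈ Submodule.span ℝ
          (Set.range fun i => ((v i : Ep) : V × Module.Dual ℝ V)) := by
        rw [← hEpspan]; exact h1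
      have h4 := Submodule.mem_map_of_mem (f := Jl) h3
      rw [Submodule.map_span, ← Set.range_comp] at h4
      rw [h2]
      refine Submodule.span_mono ?_ h4
      rintro z ⟨i, rfl⟩
      exact ⟨Sum.inr i, rfl⟩
  have hcard : Fintype.card (Fin (finrank ℝ Ep) ⊕ Fin (finrank ℝ Ep))
      = finrank ℝ (V × Module.Dual ℝ V) := by
    rw [Fintype.card_sum, Fintype.card_fin, hfE, hkEp]
    ring
  set bE := basisOfTopLeSpanOfCardEqFinrank g hspan hcard with hbEdef
  have hbEc : ⇑bE = g := coe_basisOfTopLeSpanOfCardEqFinrank g hspan hcard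
  have hddne : ∀ a, Sum.elim d d a ≠ 0 := by rintro (i | i) <;> exact hdne i
  have hdiag : ∀ a, (Bl ∘ₗ T) (bE a) (bE a) = Sum.elim d d a := by
    intro a
    rw [show bE a = g a from congrFun hbEc a]
    rcases a with i | i
    · show Bl (T ↑(v i)) ↑(v i) = d i
      rw [hval_pp _ (v i).2, hddefn]
    · show Bl (T (Jl ↑(v i))) (Jl ↑(v i)) = d i
      rw [hval_JJ _ (v i).2 _ (v i).2, hddefn]
  have horth2 : ∀ a c, a ≠ c → (Bl ∘ₗ T) (bE a) (bE c) = 0 := by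
    intro a c hac
    rw [show bE a = g a from congrFun hbEc a, show bE c = g c from congrFun hbEc c]
    rcases a with i | i <;> rcases c with i' | i'
    · have hii : i ≠ i' := fun h => hac (by rw [h])
      show Bl (T ↑(v i)) ↑(v i') = 0
      rw [hval_pp _ (v i).2]
      exact horthE i i' hii
    · show Bl (T ↑(v i)) (Jl ↑(v i')) = 0
      exact hval_c1 _ (v i).2 _ (v i').2
    · show Bl (T (Jl ↑(v i))) ↑(v i') = 0
      exact hval_c2 _ (v i).2 _ (v i').2
    · have hii : i ≠ i' := fun h => hac (by rw [h])
      show Bl (T (Jl ↑(v i))) (Jl ↑(v i')) = 0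
      rw [hval_JJ _ (v i).2 _ (v i').2]
      exact horthE i i' hii
  have hsig := hasSig_core (Bl ∘ₗ T) bE (Sum.elim d d) hddne hdiag horth2
  -- counting
  set nn := (Finset.univ.filter fun i : Fin (finrank ℝ Ep) => 0 < d i).card with hnn
  set mm := (Finset.univ.filter fun i : Fin (finrank ℝ Ep) => d i < 0).card with hmm
  have hposcard : (Finset.univ.filter fun a => 0 < (Sum.elim d d) a).card = 2 * nn := by
    rw [Finset.card_filter, Fintype.sum_sum_type]
    simp only [Sum.elim_inl, Sum.elim_inr]
    rw [hnn, Finset.card_filter, two_mul]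
    rfl
  have hnegcard : (Finset.univ.filter fun a => (Sum.elim d d) a < 0).card = 2 * mm := by
    rw [Finset.card_filter, Fintype.sum_sum_type]
    simp only [Sum.elim_inl, Sum.elim_inr]
    rw [hmm, Finset.card_filter, two_mul]
    rfl
  have hnm : nn + mm = finrank ℝ Ep := by
    have hcompl : (Finset.univ.filter fun i : Fin (finrank ℝ Ep) => d i < 0)
        = (Finset.univ.filter fun i : Fin (finrank ℝ Ep) => 0 < d i)ᶜ := by
      ext i
      simp only [Finset.mem_filter, Finset.mem_univ, true_and, Finset.mem_compl]
      constructor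
      · intro h; linarith
      · intro h
        rcases (hdne i).lt_or_gt with h' | h'
        · exact h'
        · exact absurd h' h
    rw [hnn, hmm, hcompl, Finset.card_add_card_compl, Fintype.card_fin]
  refine ⟨nn, by omega, ?_⟩
  have hβeq : β = fun x y => (Bl ∘ₗ T) x y := by
    funext x y
    exact hβ' x y
  rw [hposcard, hnegcard] at hsig
  have h4 : 4 * m - 2 * nn = 2 * mm := by omega
  rw [hβeq, h4]
  exact hsig
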